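/- Suppose M, K ∈ ℝ^{m×m} are symmetric, M positive definite and K positive semidefinite, and (A, b, c) is the 2-stage Gauss–Legendre tableau with derived Nyström coefficients Ā = A², b̄ = Aᵀb. If (κ⁽¹⁾, κ⁽²⁾) solve the stage equations M κ⁽ⁱ⁾ = −K(yⁿ + c_i Δt zⁿ + Δt²(ā_{i1}κ⁽¹⁾ + ā_{i2}κ⁽²⁾)) and we define y^{n+1} = yⁿ + Δt zⁿ + Δt²(b̄₁κ⁽¹⁾ + b̄₂κ⁽²⁾) and z^{n+1} = zⁿ + Δt(b₁κ⁽¹⁾ + b₂κ⁽²⁾), then the discrete energy E(y, z) = ½ zᵀMz + ½ yᵀKy satisfies E(y^{n+1}, z^{n+1}) = E(yⁿ, zⁿ). -/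

import Mathlib

open Matrix
open scoped BigOperators

/-- Exact energy conservation of the two-stage Gauss–Legendre Runge–Kutta–Nyström
method for the linear wave system `M y'' = -K y`. -/
theorem stmt14 (m : ℕ) (M K : Matrix (Fin m) (Fin m) ℝ)
    (hM : M.PosDef) (hK : K.PosSemidef)
    (Δt : ℝ) (yn zn : Fin m → ℝ)
    (A : Matrix (Fin 2) (Fin 2) ℝ)
    (hA : A = Matrix.of ![![1/4, 1/4 - Real.sqrt 3 / 6], ![1/4 + Real.sqrt 3 / 6, 1/4]])
    (b : Fin 2 → ℝ) (hb : b = ![1/2, 1/2])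
    (c : Fin 2 → ℝ) (hc : c = ![1/2 - Real.sqrt 3 / 6, 1/2 + Real.sqrt 3 / 6])
    (κ : Fin 2 → (Fin m → ℝ))
    (hstage : ∀ i, M.mulVec (κ i) =
      -(K.mulVec (yn + (c i * Δt) • zn + (Δt ^ 2) • ∑ j, (A * A) i j • κ j)))
    (ynew znew : Fin m → ℝ)
    (hynew : ynew = yn + Δt • zn + (Δt ^ 2) • ∑ i, (Aᵀ.mulVec b) i • κ i)
    (hznew : znew = zn + Δt • ∑ i, b i • κ i) :
    (1/2) * (znew ⬝ᵥ M.mulVec znew) + (1/2) * (ynew ⬝ᵥ K.mulVec ynew)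
      = (1/2) * (zn ⬝ᵥ M.mulVec zn) + (1/2) * (yn ⬝ᵥ K.mulVec yn) := by
  have hMt : Mᵀ = M := (by simpa using hM.isHermitian : M.IsSymm)
  have hKt : Kᵀ = K := (by simpa using hK.isHermitian : K.IsSymm)
  have symM : ∀ u v : Fin m → ℝ, u ⬝ᵥ M.mulVec v = v ⬝ᵥ M.mulVec u := by
    intro u v
    rw [Matrix.dotProduct_mulVec, ← Matrix.mulVec_transpose, hMt, dotProduct_comm]
  have symK : ∀ u v : Fin m → ℝ, u ⬝ᵥ K.mulVec v = v ⬝ᵥ K.mulVec u := by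
    intro u v
    rw [Matrix.dotProduct_mulVec, ← Matrix.mulVec_transpose, hKt, dotProduct_comm]
  have key : ∀ (u : Fin m → ℝ) (i : Fin 2), u ⬝ᵥ M.mulVec (κ i)
      = -(u ⬝ᵥ K.mulVec yn) - c i * Δt * (u ⬝ᵥ K.mulVec zn)
        - Δt ^ 2 * ((A * A) i 0 * (u ⬝ᵥ K.mulVec (κ 0))
          + (A * A) i 1 * (u ⬝ᵥ K.mulVec (κ 1))) := by
    intro u i
    have h := congrArg (fun w => u ⬝ᵥ w) (hstage i)
    simp only [Fin.sum_univ_two, Matrix.mulVec_add, Matrix.mulVec_smul, dotProduct_add,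
      dotProduct_smul, dotProduct_neg, smul_eq_mul] at h
    linear_combination h
  have hc0 : c 0 = 1/2 - Real.sqrt 3 / 6 := by rw [hc]; rfl
  have hc1 : c 1 = 1/2 + Real.sqrt 3 / 6 := by rw [hc]; rfl
  have hb0 : b 0 = 1/2 := by rw [hb]; rfl
  have hb1 : b 1 = 1/2 := by rw [hb]; rfl
  have h3 : Real.sqrt 3 * Real.sqrt 3 = 3 := Real.mul_self_sqrt (by norm_num)
  have hA00 : (A * A) 0 0 = 1/24 := by
    rw [hA]; simp [Matrix.mul_apply, Fin.sum_univ_two]; linear_combination (-1/36 : ℝ) * h3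
  have hA01 : (A * A) 0 1 = 1/8 - Real.sqrt 3 / 12 := by
    rw [hA]; simp [Matrix.mul_apply, Fin.sum_univ_two]; ring
  have hA10 : (A * A) 1 0 = 1/8 + Real.sqrt 3 / 12 := by
    rw [hA]; simp [Matrix.mul_apply, Fin.sum_univ_two]; ring
  have hA11 : (A * A) 1 1 = 1/24 := by
    rw [hA]; simp [Matrix.mul_apply, Fin.sum_univ_two]; linear_combination (-1/36 : ℝ) * h3
  have hbb0 : (Aᵀ.mulVec b) 0 = 1/4 + Real.sqrt 3 / 12 := by
    rw [hA, hb]; simp [Matrix.mulVec, dotProduct, Fin.sum_univ_two]; ring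
  have hbb1 : (Aᵀ.mulVec b) 1 = 1/4 - Real.sqrt 3 / 12 := by
    rw [hA, hb]; simp [Matrix.mulVec, dotProduct, Fin.sum_univ_two]; ring
  have hz0 := key zn 0; rw [hc0, hA00, hA01] at hz0
  have hz1 := key zn 1; rw [hc1, hA10, hA11] at hz1
  have g00 := key (κ 0) 0; rw [hc0, hA00, hA01] at g00
  have g01 := key (κ 0) 1; rw [hc1, hA10, hA11] at g01
  have g10 := key (κ 1) 0; rw [hc0, hA00, hA01] at g10
  have g11 := key (κ 1) 1; rw [hc1, hA10, hA11] at g11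
  have sM0 := symM (κ 0) zn
  have sM1 := symM (κ 1) zn
  have mC := symM (κ 0) (κ 1)
  have kYZ := symK zn yn
  have kY0 := symK (κ 0) yn
  have kY1 := symK (κ 1) yn
  have kZ0 := symK (κ 0) zn
  have kZ1 := symK (κ 1) zn
  have k01 := symK (κ 1) (κ 0)
  rw [hynew, hznew, Fin.sum_univ_two, Fin.sum_univ_two, hbb0, hbb1, hb0, hb1]
  simp only [Matrix.mulVec_add, Matrix.mulVec_smul, dotProduct_add, add_dotProduct,
    dotProduct_smul, smul_dotProduct, smul_eq_mul]
  linear_combination (Δt/2) * hz0 + (Δt/2) * hz1 + (Δt/4) * sM0 + (Δt/4) * sM1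
    + (Δt^2/8) * g00 + (Δt^2/8 + Real.sqrt 3 * Δt^2/12) * g01
    + (Δt^2/8 - Real.sqrt 3 * Δt^2/12) * g10 + (Δt^2/8) * g11
    + (-(Real.sqrt 3) * Δt^2/12) * mC + (-(Δt/2)) * kYZ
    + ((-(Real.sqrt 3)/24 - 1/8) * Δt^2) * kY0 + ((Real.sqrt 3/24 - 1/8) * Δt^2) * kY1
    + (-(Real.sqrt 3 * Real.sqrt 3) * Δt^3/72) * kZ0
    + (-(Real.sqrt 3 * Real.sqrt 3) * Δt^3/72) * kZ1
    + (-(Real.sqrt 3 * Real.sqrt 3 * Real.sqrt 3) * Δt^4/432) * k01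
    + (-(Δt^4/288) * ((κ 0 ⬝ᵥ K.mulVec (κ 0)) + (κ 1 ⬝ᵥ K.mulVec (κ 1)))
       - (Real.sqrt 3/432 + 1/288) * Δt^4 * (κ 0 ⬝ᵥ K.mulVec (κ 1))
       + (Real.sqrt 3/432 - 1/288) * Δt^4 * (κ 1 ⬝ᵥ K.mulVec (κ 0))
       - (Δt^3/72) * ((zn ⬝ᵥ K.mulVec (κ 0)) + (zn ⬝ᵥ K.mulVec (κ 1)))) * h3
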